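/- (PAC guarantee of the binomial-tail threshold, Theorem 1) Let Z = ((x₁,y₁),…,(xₙ,yₙ)) be i.i.d. from D, let f : X × Y → ℝ≥0 be a score function, and C_τ(x) = {y : f(x,y) ≥ τ}. Let k* be the largest k ∈ ℕ ∪ {0} with F(k; n, ε) ≤ δ, where F is the Binomial(n, ε) CDF, and let τ̂ be the largest τ such that the number of calibration examples with yᵢ ∉ C_τ(xᵢ) is at most k* (with τ̂ = 0 if infeasible). Then with probability at least 1 − δ over Z, P_{(x,y)~D}(y ∉ C_τ̂(x)) ≤ ε. -/

import Mathlib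

open MeasureTheory Finset
open scoped Classical ENNReal

section Aux
lemma binom_term_hasDeriv (n i : ℕ) (p : ℝ) :
    HasDerivAt (fun x : ℝ => (n.choose i : ℝ) * x ^ i * (1 - x) ^ (n - i))
      (((i * n.choose i : ℕ) : ℝ) * p ^ (i-1) * (1-p) ^ (n-i)
        - (((i+1) * n.choose (i+1) : ℕ) : ℝ) * p ^ i * (1-p) ^ (n-(i+1))) p := by
  have h1 : HasDerivAt (fun x : ℝ => x ^ i) (i * p ^ (i-1)) p := hasDerivAt_pow i p
  have h2 : HasDerivAt (fun x : ℝ => (1 - x) ^ (n - i))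
      (((n-i : ℕ) : ℝ) * (1-p) ^ (n-i-1) * (-1)) p := by
    have := (hasDerivAt_pow (n-i) (1-p)).comp p (((hasDerivAt_const p (1:ℝ))).sub (hasDerivAt_id p))
    simpa [Function.comp_def] using this
  have h := ((h1.const_mul ((n.choose i : ℝ))).mul h2)
  refine h.congr_deriv ?_
  have hc : (((i+1) * n.choose (i+1) : ℕ) : ℝ) = (((n - i) * n.choose i : ℕ) : ℝ) := by
    congr 1
    rw [mul_comm (i+1), mul_comm (n-i), Nat.choose_succ_right_eq]
  rw [hc]
  have hexp : n - (i+1) = n - i - 1 := by omega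
  rw [hexp]
  push_cast
  ring


lemma binomCDF_hasDeriv (n k : ℕ) (p : ℝ) :
    HasDerivAt (fun x : ℝ => ∑ i ∈ range (k+1), (n.choose i : ℝ) * x ^ i * (1 - x) ^ (n - i))
      (-((((k+1) * n.choose (k+1) : ℕ) : ℝ) * p ^ k * (1-p) ^ (n-(k+1)))) p := by
  have h := HasDerivAt.fun_sum (u := range (k+1)) (fun i _ => binom_term_hasDeriv n i p)
  refine h.congr_deriv ?_
  set v : ℕ → ℝ := fun j => ((j * n.choose j : ℕ) : ℝ) * p ^ (j-1) * (1-p) ^ (n-j) with hv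
  have : ∀ i, ((i * n.choose i : ℕ) : ℝ) * p ^ (i-1) * (1-p) ^ (n-i)
        - (((i+1) * n.choose (i+1) : ℕ) : ℝ) * p ^ i * (1-p) ^ (n-(i+1)) = v i - v (i+1) := by
    intro i; simp [hv]
  simp_rw [this]
  rw [Finset.sum_range_sub' v]
  simp [hv]

lemma binomCDF_anti (n k : ℕ) (hkn : k < n) {a b : ℝ} (ha : 0 ≤ a) (hab : a ≤ b) (hb : b ≤ 1) :
    ∑ i ∈ range (k+1), (n.choose i : ℝ) * b ^ i * (1 - b) ^ (n - i)
      ≤ ∑ i ∈ range (k+1), (n.choose i : ℝ) * a ^ i * (1 - a) ^ (n - i) := by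
  set g : ℝ → ℝ := fun x => ∑ i ∈ range (k+1), (n.choose i : ℝ) * x ^ i * (1 - x) ^ (n - i) with hg
  have hanti : AntitoneOn g (Set.Icc (0:ℝ) 1) := by
    apply antitoneOn_of_deriv_nonpos (convex_Icc 0 1)
    · exact fun x _ => ((binomCDF_hasDeriv n k x).differentiableAt).continuousAt.continuousWithinAt
    · exact fun x _ => ((binomCDF_hasDeriv n k x).differentiableAt).differentiableWithinAt
    · intro x hx
      rw [interior_Icc] at hx
      rw [(binomCDF_hasDeriv n k x).deriv]
      have h1 : (0:ℝ) ≤ x ^ k := pow_nonneg hx.1.le _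
      have h2 : (0:ℝ) ≤ (1-x) ^ (n-(k+1)) := pow_nonneg (by linarith [hx.2]) _
      have h3 : (0:ℝ) ≤ (((k+1) * n.choose (k+1) : ℕ) : ℝ) := Nat.cast_nonneg _
      have h4 := mul_nonneg (mul_nonneg h3 h1) h2
      linarith
  exact hanti ⟨ha, hab.trans hb⟩ ⟨ha.trans hab, hb⟩ hab


variable {Ω : Type*} [MeasurableSpace Ω]

lemma count_event_eq (n k : ℕ) (A : Set Ω) :
    {Z : Fin n → Ω | (Finset.univ.filter fun i => Z i ∈ A).card ≤ k}
      = ⋃ s ∈ (Finset.univ.powerset.filter fun s : Finset (Fin n) => s.card ≤ k),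
          Set.pi Set.univ (fun i => if i ∈ s then A else Aᶜ) := by
  ext Z
  simp only [Set.mem_setOf_eq, Set.mem_iUnion, Finset.mem_filter, Finset.mem_powerset,
    Set.mem_pi, Set.mem_univ, forall_true_left, exists_prop]
  constructor
  · intro h
    refine ⟨Finset.univ.filter fun i => Z i ∈ A, ⟨Finset.subset_univ _, h⟩, ?_⟩
    intro i
    by_cases hi : Z i ∈ A <;> simp [hi]
  · rintro ⟨s, ⟨-, hcard⟩, hs⟩
    have : (Finset.univ.filter fun i => Z i ∈ A) = s := by
      ext i
      simp only [Finset.mem_filter, Finset.mem_univ, true_and]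
      constructor
      · intro h
        by_contra hi
        have := hs i
        simp [hi] at this
        exact this h
      · intro h
        have := hs i
        simpa [h] using this
    rw [this]; exact hcard

lemma pi_set_measure (D : Measure Ω) [IsProbabilityMeasure D] (n : ℕ) (A : Set Ω)
    (hA : MeasurableSet A) (s : Finset (Fin n)) :
    (Measure.pi fun _ : Fin n => D) (Set.pi Set.univ (fun i => if i ∈ s then A else Aᶜ))
      = (D A) ^ s.card * (D Aᶜ) ^ (n - s.card) := by
  rw [Measure.pi_pi]
  have : ∀ i : Fin n, D (if i ∈ s then A else Aᶜ) = if i ∈ s then D A else D Aᶜ := by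
    intro i; split <;> rfl
  simp_rw [this]
  rw [Finset.prod_ite, Finset.prod_const, Finset.prod_const]
  congr 1
  · congr 1
    simp [Finset.filter_mem_eq_inter]
  · congr 1
    have : Finset.univ.filter (fun i => i ∉ s) = sᶜ := by
      ext i; simp
    rw [this, Finset.card_compl]
    simp

lemma count_event_measurable (n k : ℕ) (A : Set Ω) (hA : MeasurableSet A) :
    MeasurableSet {Z : Fin n → Ω | (Finset.univ.filter fun i => Z i ∈ A).card ≤ k} := by
  rw [count_event_eq]
  refine Set.Finite.measurableSet_biUnion (Finset.finite_toSet _) ?_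
  intro s _
  exact MeasurableSet.univ_pi (fun i => by split <;> [exact hA; exact hA.compl])

lemma count_event_measure (D : Measure Ω) [IsProbabilityMeasure D] (n k : ℕ) (A : Set Ω)
    (hA : MeasurableSet A) :
    (Measure.pi fun _ : Fin n => D)
        {Z : Fin n → Ω | (Finset.univ.filter fun i => Z i ∈ A).card ≤ k}
      = ∑ j ∈ range (k+1), (n.choose j : ℝ≥0∞) * (D A) ^ j * (D Aᶜ) ^ (n - j) := by
  rw [count_event_eq]
  rw [measure_biUnion_finset ?hd ?hm]
  case hd =>
    intro s hs t ht hst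
    refine Set.disjoint_left.2 fun Z hZs hZt => hst ?_
    ext i
    constructor
    · intro hi
      have h1 := hZs i (Set.mem_univ i)
      have h2 := hZt i (Set.mem_univ i)
      simp only [hi, if_pos] at h1
      by_contra hit
      simp only [if_neg hit] at h2
      exact h2 h1
    · intro hi
      have h1 := hZs i (Set.mem_univ i)
      have h2 := hZt i (Set.mem_univ i)
      simp only [hi, if_pos] at h2
      by_contra hit
      simp only [if_neg hit] at h1
      exact h1 h2
  case hm =>
    intro s _
    exact MeasurableSet.univ_pi (fun i => by split <;> [exact hA; exact hA.compl])
  · have hre : (Finset.univ.powerset.filter fun s : Finset (Fin n) => s.card ≤ k)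
        = (range (k+1)).biUnion (fun j => Finset.powersetCard j (Finset.univ : Finset (Fin n))) := by
      ext s
      simp [Finset.mem_powersetCard, Nat.lt_succ_iff]
    rw [hre, Finset.sum_biUnion]
    · apply Finset.sum_congr rfl
      intro j _
      rw [Finset.sum_congr rfl (fun s hs => ?_), Finset.sum_const]
      · rw [Finset.card_powersetCard]
        simp only [Finset.card_univ, Fintype.card_fin]
        rw [nsmul_eq_mul, mul_assoc]
      · rw [pi_set_measure D n A hA s]
        rw [(Finset.mem_powersetCard.1 hs).2]
    · intro a ha b hb hab
      refine Finset.disjoint_left.2 fun s hsa hsb => hab ?_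
      rw [← (Finset.mem_powersetCard.1 hsa).2, ← (Finset.mem_powersetCard.1 hsb).2]


lemma quantile_exists {Ω : Type*} [MeasurableSpace Ω] (D : Measure Ω) [IsProbabilityMeasure D]
    (f : Ω → ℝ) (hfm : Measurable f) (hf : ∀ z, 0 ≤ f z) {ε : ℝ} (hε0 : 0 < ε) (hε1 : ε < 1) :
    ∃ q : ℝ, 0 ≤ q ∧ D {z | f z < q} ≤ ENNReal.ofReal ε ∧
      ENNReal.ofReal ε ≤ D {z | f z ≤ q} := by
  set T : Set ℝ := {τ | D {z | f z < τ} ≤ ENNReal.ofReal ε} with hT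
  have h0T : (0:ℝ) ∈ T := by
    have : {z | f z < (0:ℝ)} = ∅ := by
      ext z; simp [not_lt.2 (hf z)]
    simp [hT, this]
  have hne : T.Nonempty := ⟨0, h0T⟩
  have hεlt : ENNReal.ofReal ε < 1 := by
    rw [← ENNReal.ofReal_one]
    exact ENNReal.ofReal_lt_ofReal_iff_of_nonneg hε0.le |>.2 hε1
  -- find M with D {f < M} > ε
  have hbig : ∃ M : ℕ, ENNReal.ofReal ε < D {z | f z < (M:ℝ)} := by
    by_contra hcon
    push_neg at hcon
    have hunion : ⋃ M : ℕ, {z | f z < (M:ℝ)} = Set.univ := by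
      ext z
      simp only [Set.mem_iUnion, Set.mem_setOf_eq, Set.mem_univ, iff_true]
      obtain ⟨M, hM⟩ := exists_nat_gt (f z)
      exact ⟨M, hM⟩
    have hmono : Monotone fun M : ℕ => {z | f z < (M:ℝ)} := by
      intro a b hab z hz
      simp only [Set.mem_setOf_eq] at hz ⊢
      exact lt_of_lt_of_le hz (by exact_mod_cast hab)
    have := Directed.measure_iUnion (μ := D) hmono.directed_le
    rw [hunion, measure_univ] at this
    have : (1:ℝ≥0∞) ≤ ENNReal.ofReal ε := by
      rw [this]
      exact iSup_le hcon
    exact absurd this (not_le.2 hεlt)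
  obtain ⟨M, hM⟩ := hbig
  have hbdd : BddAbove T := by
    refine ⟨M, fun τ hτ => ?_⟩
    by_contra hlt
    push_neg at hlt
    have : D {z | f z < (M:ℝ)} ≤ D {z | f z < τ} :=
      measure_mono (fun z hz => lt_trans hz hlt)
    exact absurd (hM.trans_le (this.trans hτ)) (lt_irrefl _)
  set q := sSup T with hq
  have hq0 : 0 ≤ q := le_csSup hbdd h0T
  refine ⟨q, hq0, ?_, ?_⟩
  · -- D {f < q} ≤ ε
    have hsub : {z | f z < q} = ⋃ k : ℕ, {z | f z < q - 1/(k+1)} := by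
      ext z
      simp only [Set.mem_setOf_eq, Set.mem_iUnion]
      constructor
      · intro hz
        obtain ⟨k, hk⟩ := exists_nat_one_div_lt (show (0:ℝ) < q - f z by linarith)
        exact ⟨k, by push_cast at hk ⊢; linarith⟩
      · rintro ⟨k, hk⟩
        have : (0:ℝ) < 1/((k:ℝ)+1) := by positivity
        linarith
    rw [hsub]
    have hmono : Monotone fun k : ℕ => {z | f z < q - 1/((k:ℝ)+1)} := by
      intro a b hab z hz
      have : (1:ℝ)/((b:ℝ)+1) ≤ 1/((a:ℝ)+1) := by
        apply one_div_le_one_div_of_le (by positivity)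
        have : (a:ℝ) ≤ b := by exact_mod_cast hab
        linarith
      simp only [Set.mem_setOf_eq] at hz ⊢
      linarith
    rw [Directed.measure_iUnion hmono.directed_le]
    apply iSup_le
    intro k
    have hlt : q - 1/((k:ℝ)+1) < q := by
      have : (0:ℝ) < 1/((k:ℝ)+1) := by positivity
      linarith
    obtain ⟨τ, hτT, hττ⟩ := exists_lt_of_lt_csSup hne hlt
    calc D {z | f z < q - 1/((k:ℝ)+1)} ≤ D {z | f z < τ} :=
          measure_mono (fun z hz => lt_of_lt_of_le hz hττ.le)
      _ ≤ ENNReal.ofReal ε := hτT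
  · -- ε ≤ D {f ≤ q}
    have hsub : {z | f z ≤ q} = ⋂ k : ℕ, {z | f z < q + 1/((k:ℝ)+1)} := by
      ext z
      simp only [Set.mem_setOf_eq, Set.mem_iInter]
      constructor
      · intro hz k
        have : (0:ℝ) < 1/((k:ℝ)+1) := by positivity
        linarith
      · intro h
        by_contra hlt
        push_neg at hlt
        obtain ⟨k, hk⟩ := exists_nat_one_div_lt (show (0:ℝ) < f z - q by linarith)
        have := h k
        push_cast at hk
        linarith
    rw [hsub]
    have hanti : Antitone fun k : ℕ => {z | f z < q + 1/((k:ℝ)+1)} := by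
      intro a b hab z hz
      have : (1:ℝ)/((b:ℝ)+1) ≤ 1/((a:ℝ)+1) := by
        apply one_div_le_one_div_of_le (by positivity)
        have : (a:ℝ) ≤ b := by exact_mod_cast hab
        linarith
      simp only [Set.mem_setOf_eq] at hz ⊢
      linarith
    rw [Directed.measure_iInter (fun k => (measurableSet_lt hfm measurable_const).nullMeasurableSet)
      hanti.directed_ge ⟨0, measure_ne_top D _⟩]
    apply le_iInf
    intro k
    have hnotT : q + 1/((k:ℝ)+1) ∉ T := by
      intro hmem
      have : q + 1/((k:ℝ)+1) ≤ q := le_csSup hbdd hmem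
      have hpos : (0:ℝ) < 1/((k:ℝ)+1) := by positivity
      linarith
    simp only [hT, Set.mem_setOf_eq, not_le] at hnotT
    exact hnotT.le

end Aux

/-- Theorem 1, PAC guarantee of the binomial-tail threshold: With `Z ~ Dⁿ`
i.i.d., score `f ≥ 0`, prediction sets `C_τ(x) = {y : f(x,y) ≥ τ}`, `k*` the largest `k`
with `F(k; n, ε) ≤ δ` (binomial CDF), and `τ̂(Z)` the largest `τ` such that the number of
calibration errors `#{i : yᵢ ∉ C_τ(xᵢ)}` is at most `k*` (with `τ̂ = 0` if infeasible), we
have `P_{(x,y)~D}(y ∉ C_τ̂(x)) ≤ ε` with probability at least `1 - δ` over `Z`. -/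
theorem pac_prediction_set_threshold
    {X Y : Type*} [MeasurableSpace X] [MeasurableSpace Y]
    (D : Measure (X × Y)) [IsProbabilityMeasure D]
    (f : X × Y → ℝ) (hfm : Measurable f) (hf : ∀ z, 0 ≤ f z)
    (n : ℕ) (ε δ : ℝ) (hε : ε ∈ Set.Ioo (0:ℝ) 1) (hδ : δ ∈ Set.Ioo (0:ℝ) 1)
    (F : ℕ → ℝ)
    (hF : ∀ k, F k = ∑ i ∈ Finset.range (k + 1),
      (n.choose i : ℝ) * ε ^ i * (1 - ε) ^ (n - i))
    (kstar : ℕ) (hk : F kstar ≤ δ) (hkmax : ∀ k, F k ≤ δ → k ≤ kstar)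
    (tauHat : (Fin n → X × Y) → ℝ)
    (htau : ∀ Z : Fin n → X × Y, tauHat Z =
      sSup {τ : ℝ | 0 ≤ τ ∧
        (Finset.univ.filter fun i => f (Z i) < τ).card ≤ kstar}) :
    1 - δ ≤ ((Measure.pi fun _ : Fin n => D)
      {Z : Fin n → X × Y | (D {z : X × Y | f z < tauHat Z}).toReal ≤ ε}).toReal := by
  classical
  obtain ⟨hε0, hε1⟩ := hε
  obtain ⟨hδ0, hδ1⟩ := hδ
  obtain ⟨q, hq0, hqlt, hqle⟩ := quantile_exists D f hfm hf hε0 hε1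
  set A : Set (X × Y) := {z | f z ≤ q} with hAdef
  have hA : MeasurableSet A := measurableSet_le hfm measurable_const
  set μ := (Measure.pi fun _ : Fin n => D) with hμ
  -- kstar < n
  have hkn : kstar < n := by
    by_contra hcon
    push_neg at hcon
    have hFk : F kstar = 1 := by
      rw [hF]
      have h1 : ∑ i ∈ range (kstar + 1), (n.choose i : ℝ) * ε ^ i * (1 - ε) ^ (n - i)
          = ∑ i ∈ range (n + 1), (n.choose i : ℝ) * ε ^ i * (1 - ε) ^ (n - i) := by
        refine (Finset.sum_subset (Finset.range_subset_range.2 (by omega)) ?_).symm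
        intro x hx hnx
        simp only [Finset.mem_range, Nat.lt_succ_iff, not_le] at hx hnx
        rw [Nat.choose_eq_zero_of_lt hnx]
        simp
      rw [h1]
      have h2 := add_pow ε (1 - ε) n
      simp only [add_sub_cancel, one_pow] at h2
      have h3 : ∑ i ∈ range (n + 1), (n.choose i : ℝ) * ε ^ i * (1 - ε) ^ (n - i)
          = ∑ m ∈ range (n + 1), ε ^ m * (1 - ε) ^ (n - m) * (n.choose m : ℝ) :=
        Finset.sum_congr rfl (fun i _ => by ring)
      rw [h3, ← h2]
    rw [hFk] at hk
    linarith
  -- the bad event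
  set B : Set (Fin n → X × Y) :=
    {Z : Fin n → X × Y | (Finset.univ.filter fun i => Z i ∈ A).card ≤ kstar} with hBdef
  have hB : MeasurableSet B := count_event_measurable n kstar A hA
  -- probabilities
  have hp1 : D A ≤ 1 := prob_le_one
  set p : ℝ := (D A).toReal with hp
  have hεp : ε ≤ p := by
    have := ENNReal.toReal_mono (measure_ne_top D A) hqle
    rwa [ENNReal.toReal_ofReal hε0.le] at this
  have hple : p ≤ 1 := by
    have := ENNReal.toReal_mono ENNReal.one_ne_top hp1
    simpa using this
  -- measure of B
  have hcompl : (D Aᶜ).toReal = 1 - p := by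
    rw [measure_compl hA (measure_ne_top D A), measure_univ,
      ENNReal.toReal_sub_of_le hp1 ENNReal.one_ne_top, ENNReal.toReal_one]
  have hμB : (μ B).toReal = ∑ j ∈ range (kstar + 1), (n.choose j : ℝ) * p ^ j * (1 - p) ^ (n - j) := by
    rw [hBdef, hμ, count_event_measure D n kstar A hA, ENNReal.toReal_sum]
    · apply Finset.sum_congr rfl
      intro j _
      rw [ENNReal.toReal_mul, ENNReal.toReal_mul, ENNReal.toReal_pow, ENNReal.toReal_pow,
        ENNReal.toReal_natCast, hcompl]
    · intro j _
      exact ENNReal.mul_ne_top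
        (ENNReal.mul_ne_top (ENNReal.natCast_ne_top _)
          (ENNReal.pow_ne_top (measure_ne_top D A)))
        (ENNReal.pow_ne_top (measure_ne_top D Aᶜ))
  have hμBδ : (μ B).toReal ≤ δ := by
    rw [hμB]
    calc ∑ j ∈ range (kstar + 1), (n.choose j : ℝ) * p ^ j * (1 - p) ^ (n - j)
        ≤ ∑ j ∈ range (kstar + 1), (n.choose j : ℝ) * ε ^ j * (1 - ε) ^ (n - j) :=
          binomCDF_anti n kstar hkn hε0.le hεp hple
      _ = F kstar := (hF kstar).symm
      _ ≤ δ := hk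
  -- the complement of B is contained in the good event
  have hsub : Bᶜ ⊆ {Z : Fin n → X × Y | (D {z : X × Y | f z < tauHat Z}).toReal ≤ ε} := by
    intro Z hZ
    simp only [hBdef, Set.mem_compl_iff, Set.mem_setOf_eq, not_le] at hZ
    have htq : tauHat Z ≤ q := by
      rw [htau]
      apply Real.sSup_le _ hq0
      rintro τ ⟨hτ0, hτcard⟩
      by_contra hqτ
      push_neg at hqτ
      have hsub2 : (Finset.univ.filter fun i => Z i ∈ A) ⊆
          (Finset.univ.filter fun i => f (Z i) < τ) := by
        intro i hi
        simp only [Finset.mem_filter, Finset.mem_univ, true_and] at hi ⊢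
        exact lt_of_le_of_lt hi hqτ
      have := Finset.card_le_card hsub2
      omega
    have hD : D {z : X × Y | f z < tauHat Z} ≤ ENNReal.ofReal ε := by
      refine le_trans (measure_mono ?_) hqlt
      intro z hz
      exact lt_of_lt_of_le hz htq
    simp only [Set.mem_setOf_eq]
    have := ENNReal.toReal_mono ENNReal.ofReal_ne_top hD
    rwa [ENNReal.toReal_ofReal hε0.le] at this
  -- conclude
  have hμcompl : (μ Bᶜ).toReal = 1 - (μ B).toReal := by
    rw [measure_compl hB (measure_ne_top μ B), measure_univ,
      ENNReal.toReal_sub_of_le prob_le_one ENNReal.one_ne_top, ENNReal.toReal_one]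
  have hmono := ENNReal.toReal_mono
    (measure_ne_top μ {Z : Fin n → X × Y | (D {z : X × Y | f z < tauHat Z}).toReal ≤ ε})
    (measure_mono hsub)
  rw [hμcompl] at hmono
  linarith
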